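/- Let H be a Coxeter arrangement in V with Coxeter group W, let L ⊆ V be a measurable set stable under W, let H_e ∈ H with unit normal e, and let b be a scalar multiple of e. Then (L + b) ∩ H_e is stable under the Coxeter group of the even restricted arrangement H_e, i.e., under every orthogonal reflection of H_e in a subspace V' = H_e ∩ H_f where f ∈ E is orthogonal to e. -/

import Mathlib

open scoped RealInnerProductSpace

noncomputable section

/-- The hyperplane orthogonal to `e`. -/
def hyp {n : ℕ} (e : EuclideanSpace ℝ (Fin n)) : Submodule ℝ (EuclideanSpace ℝ (Fin n)) :=
  (ℝ ∙ e)ᗮ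

/-- Let `H` be a Coxeter arrangement with unit normal vectors `E` and Coxeter group `W`,
`L` a measurable set stable under `W`, `e ∈ E`, and `b = c • e` a scalar multiple of `e`.
Then `(L + b) ∩ H_e` is stable under the Coxeter group of the even restricted arrangement
`H_e`, i.e. under every orthogonal reflection in a subspace `H_e ∩ H_f` with `f ∈ E`
orthogonal to `e` (this reflection being the restriction to `H_e` of the reflection in
`H_f`). -/
theorem translate_inter_stable {n : ℕ} (E : Finset (EuclideanSpace ℝ (Fin n)))
    (hunit : ∀ e ∈ E, ‖e‖ = 1) (hopp : ∀ e ∈ E, -e ∉ E)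
    (hcox : ∀ e ∈ E, ∀ f ∈ E,
      Submodule.reflection (hyp e) f ∈ E ∨ -(Submodule.reflection (hyp e) f) ∈ E)
    (hfin : Finite (Subgroup.closure
      {w : EuclideanSpace ℝ (Fin n) ≃ₗᵢ[ℝ] EuclideanSpace ℝ (Fin n) |
        ∃ e ∈ E, w = Submodule.reflection (hyp e)}))
    (L : Set (EuclideanSpace ℝ (Fin n))) (hLmeas : MeasurableSet L)
    (hL : ∀ w ∈ Subgroup.closure
      {w : EuclideanSpace ℝ (Fin n) ≃ₗᵢ[ℝ] EuclideanSpace ℝ (Fin n) |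
        ∃ e ∈ E, w = Submodule.reflection (hyp e)}, w '' L = L)
    (e : EuclideanSpace ℝ (Fin n)) (he : e ∈ E) (c : ℝ)
    (f : EuclideanSpace ℝ (Fin n)) (hf : f ∈ E) (hef : ⟪e, f⟫ = 0) :
    (Submodule.reflection (hyp f)) ''
        (((fun x => x + c • e) '' L) ∩ (hyp e : Set (EuclideanSpace ℝ (Fin n)))) =
      ((fun x => x + c • e) '' L) ∩ (hyp e : Set (EuclideanSpace ℝ (Fin n))) := by
  set r := Submodule.reflection (hyp f) with hr
  have hre : r e = e := by
    apply Submodule.reflection_mem_subspace_eq_self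
    rw [hyp, Submodule.mem_orthogonal_singleton_iff_inner_right]
    rwa [real_inner_comm] at hef
  have hrL : r '' L = L := hL r (Subgroup.subset_closure ⟨f, hf, rfl⟩)
  have hinter := Set.image_inter (f := (r : EuclideanSpace ℝ (Fin n) → EuclideanSpace ℝ (Fin n)))
    (s := (fun x => x + c • e) '' L) (t := (hyp e : Set (EuclideanSpace ℝ (Fin n))))
    r.injective
  rw [hinter]
  congr 1
  · rw [← Set.image_comp]
    have : (r : EuclideanSpace ℝ (Fin n) → EuclideanSpace ℝ (Fin n)) ∘ (fun x => x + c • e)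
        = (fun x => x + c • e) ∘ r := by
      funext x
      simp [map_add, map_smul, hre, Function.comp]
    rw [this, Set.image_comp, hrL]
  · ext x
    constructor
    · rintro ⟨y, hy, rfl⟩
      rw [SetLike.mem_coe, hyp, Submodule.mem_orthogonal_singleton_iff_inner_right,
        ← hre, LinearIsometryEquiv.inner_map_map]
      rw [SetLike.mem_coe, hyp, Submodule.mem_orthogonal_singleton_iff_inner_right] at hy
      exact hy
    · intro hx
      refine ⟨r.symm x, ?_, by simp⟩
      rw [SetLike.mem_coe, hyp, Submodule.mem_orthogonal_singleton_iff_inner_right,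
        ← LinearIsometryEquiv.inner_map_map r, hre, r.apply_symm_apply]
      rwa [SetLike.mem_coe, hyp, Submodule.mem_orthogonal_singleton_iff_inner_right] at hx
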